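/- The polynomials F_n(x,q) = Σ_{k=0}^{⌊n/2⌋} q^{C(k+1,2)} [n-k choose k]_q (-1)^k x^{n-2k} satisfy the four-term recurrence F_n(x,q) = x F_{n-1}(x,q) - q^{n-1} x F_{n-3}(x,q) + q^{n-1} F_{n-4}(x,q) for n ≥ 4. -/

import Mathlib

/-- The q-Pochhammer symbol `(a;q)_n`. -/
noncomputable def qPoch (a q : ℝ) (n : ℕ) : ℝ := ∏ j ∈ Finset.range n, (1 - q ^ j * a)

/-- The Gaussian (q-)binomial coefficient `[n choose k]_q`. -/
noncomputable def qbinom (q : ℝ) (n k : ℕ) : ℝ :=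
  qPoch q q n / (qPoch q q k * qPoch q q (n - k))

lemma qPoch_zero (a q : ℝ) : qPoch a q 0 = 1 := by simp [qPoch]

lemma qPoch_succ (a q : ℝ) (n : ℕ) : qPoch a q (n+1) = qPoch a q n * (1 - q ^ n * a) :=
  Finset.prod_range_succ _ _

lemma one_sub_pos {q : ℝ} (hq0 : 0 < q) (hq1 : q < 1) (j : ℕ) : 0 < 1 - q ^ j * q := by
  have h : q ^ (j+1) < 1 := pow_lt_one₀ hq0.le hq1 (Nat.succ_ne_zero j)
  rw [pow_succ] at h
  linarith

lemma qPoch_pos {q : ℝ} (hq0 : 0 < q) (hq1 : q < 1) (n : ℕ) : 0 < qPoch q q n := by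
  unfold qPoch
  exact Finset.prod_pos fun j _ => one_sub_pos hq0 hq1 j

lemma qbinom_zero {q : ℝ} (hq0 : 0 < q) (hq1 : q < 1) (n : ℕ) : qbinom q n 0 = 1 := by
  unfold qbinom
  rw [Nat.sub_zero, qPoch_zero, one_mul, div_self (qPoch_pos hq0 hq1 n).ne']

lemma qbinom_self {q : ℝ} (hq0 : 0 < q) (hq1 : q < 1) (n : ℕ) : qbinom q n n = 1 := by
  unfold qbinom
  rw [Nat.sub_self, qPoch_zero, mul_one, div_self (qPoch_pos hq0 hq1 n).ne']

lemma qbinom_one_succ {q : ℝ} (hq0 : 0 < q) (hq1 : q < 1) (m : ℕ) :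
    qbinom q (m+2) 1 = qbinom q (m+1) 1 + q ^ (m+1) := by
  have hP := qPoch_pos hq0 hq1
  unfold qbinom
  rw [show m+2-1 = m+1 from by omega, show m+1-1 = m from by omega]
  have d1 : qPoch q q 1 * qPoch q q m ≠ 0 := (mul_pos (hP 1) (hP m)).ne'
  have d2 : qPoch q q 1 * qPoch q q (m+1) ≠ 0 := (mul_pos (hP 1) (hP (m+1))).ne'
  rw [div_add' _ _ _ d1, div_eq_div_iff d2 d1]
  rw [show m+2 = (m+1)+1 from by omega, qPoch_succ, qPoch_succ q q m,
      show (1:ℕ) = 0+1 from by omega, qPoch_succ, qPoch_zero]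
  ring

lemma qbinom_core {q : ℝ} (hq0 : 0 < q) (hq1 : q < 1) (b c : ℕ) :
    qbinom q (b+c+3) (b+2) = qbinom q (b+c+2) (b+2)
      + q ^ (b+c+2) * qbinom q (b+c+1) (b+1) + q ^ (c+1) * qbinom q (b+c+1) b := by
  unfold qbinom
  rw [show b+c+3-(b+2) = c+1 from by omega, show b+c+2-(b+2) = c from by omega,
      show b+c+1-(b+1) = c from by omega, show b+c+1-b = c+1 from by omega]
  have hP := qPoch_pos hq0 hq1
  have d0 : qPoch q q (b+2) * qPoch q q (c+1) ≠ 0 := (mul_pos (hP _) (hP _)).ne'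
  have d1 : qPoch q q (b+2) * qPoch q q c ≠ 0 := (mul_pos (hP _) (hP _)).ne'
  have d2 : qPoch q q (b+1) * qPoch q q c ≠ 0 := (mul_pos (hP _) (hP _)).ne'
  have d3 : qPoch q q b * qPoch q q (c+1) ≠ 0 := (mul_pos (hP _) (hP _)).ne'
  have d12 : qPoch q q (b+2) * qPoch q q c * (qPoch q q (b+1) * qPoch q q c) ≠ 0 :=
    mul_ne_zero d1 d2
  rw [← mul_div_assoc, ← mul_div_assoc, div_add_div _ _ d1 d2, div_add_div _ _ d12 d3,
      div_eq_div_iff d0 (mul_ne_zero d12 d3)]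
  rw [show b+c+3 = (b+c+2)+1 from by omega, qPoch_succ,
      show b+c+2 = (b+c+1)+1 from by omega, qPoch_succ,
      show b+2 = (b+1)+1 from by omega, qPoch_succ q q (b+1),
      qPoch_succ q q b, qPoch_succ q q c]
  ring

lemma tri_add_one (j : ℕ) : (j+1)*(j+1+1)/2 = j*(j+1)/2 + (j+1) := by
  obtain ⟨d, hd⟩ := Nat.even_mul_succ_self j
  have e : (j+1)*(j+1+1) = j*(j+1) + (2*j+2) := by ring
  rw [e, hd]
  omega

lemma tri_add_two (j : ℕ) : (j+2)*(j+2+1)/2 = j*(j+1)/2 + (2*j+3) := by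
  obtain ⟨d, hd⟩ := Nat.even_mul_succ_self j
  have e : (j+2)*(j+2+1) = j*(j+1) + (4*j+6) := by ring
  rw [e, hd]
  omega

theorem curious_q_fib_four_term_recurrence (q : ℝ) (hq0 : 0 < q) (hq1 : q < 1)
    (F : ℕ → ℝ → ℝ)
    (hF : ∀ n x, F n x = ∑ k ∈ Finset.range (n / 2 + 1),
      q ^ (k * (k + 1) / 2) * qbinom q (n - k) k * (-1 : ℝ) ^ k * x ^ (n - 2 * k)) :
    ∀ n, 4 ≤ n → ∀ x : ℝ,
      F n x = x * F (n - 1) x - q ^ (n - 1) * x * F (n - 3) x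
        + q ^ (n - 1) * F (n - 4) x := by
  have dA : ∀ (f : ℕ → ℝ) (N : ℕ), (∑ k ∈ Finset.range (N+2), f k)
      = (∑ j ∈ Finset.range N, f (j+2)) + f 1 + f 0 := by
    intro f N
    rw [Finset.sum_range_succ', Finset.sum_range_succ']
  intro n hn x
  rcases Nat.even_or_odd n with ⟨m, hm⟩ | ⟨m, hm⟩
  · -- n = m + m, even case
    obtain ⟨M, rfl⟩ : ∃ M, m = M + 2 := ⟨m - 2, by omega⟩
    subst hm
    simp only [hF]
    rw [show M+2+(M+2)-1 = 2*M+3 from by omega, show M+2+(M+2)-3 = 2*M+1 from by omega,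
        show M+2+(M+2)-4 = 2*M from by omega, show M+2+(M+2) = 2*M+4 from by omega,
        show (2*M+4)/2+1 = M+3 from by omega, show (2*M+3)/2+1 = M+2 from by omega,
        show (2*M+1)/2+1 = M+1 from by omega, show 2*M/2+1 = M+1 from by omega]
    have E1 : x * (∑ k ∈ Finset.range (M+2),
          q ^ (k * (k + 1) / 2) * qbinom q (2*M+3 - k) k * (-1 : ℝ) ^ k * x ^ (2*M+3 - 2 * k))
        = ∑ k ∈ Finset.range (M+2),
          q ^ (k * (k + 1) / 2) * qbinom q (2*M+3 - k) k * (-1 : ℝ) ^ k * x ^ (2*M+4 - 2 * k) := by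
      rw [Finset.mul_sum]
      refine Finset.sum_congr rfl fun k hk => ?_
      have hk' := Finset.mem_range.mp hk
      rw [show 2*M+4-2*k = (2*M+3-2*k)+1 from by omega, pow_succ]
      ring
    have E2 : q ^ (2*M+3) * x * (∑ k ∈ Finset.range (M+1),
          q ^ (k * (k + 1) / 2) * qbinom q (2*M+1 - k) k * (-1 : ℝ) ^ k * x ^ (2*M+1 - 2 * k))
        = ∑ k ∈ Finset.range (M+1),
          q ^ (2*M+3 + k * (k + 1) / 2) * qbinom q (2*M+1 - k) k * (-1 : ℝ) ^ k * x ^ (2*M+2 - 2 * k) := by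
      rw [Finset.mul_sum]
      refine Finset.sum_congr rfl fun k hk => ?_
      have hk' := Finset.mem_range.mp hk
      rw [show 2*M+2-2*k = (2*M+1-2*k)+1 from by omega, pow_succ, pow_add]
      ring
    have E3 : q ^ (2*M+3) * (∑ k ∈ Finset.range (M+1),
          q ^ (k * (k + 1) / 2) * qbinom q (2*M - k) k * (-1 : ℝ) ^ k * x ^ (2*M - 2 * k))
        = ∑ k ∈ Finset.range (M+1),
          q ^ (2*M+3 + k * (k + 1) / 2) * qbinom q (2*M - k) k * (-1 : ℝ) ^ k * x ^ (2*M - 2 * k) := by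
      rw [Finset.mul_sum]
      refine Finset.sum_congr rfl fun k _ => ?_
      rw [pow_add]
      ring
    rw [E1, E2, E3]
    have HA : (∑ k ∈ Finset.range (M+3),
          q ^ (k * (k + 1) / 2) * qbinom q (2*M+4 - k) k * (-1 : ℝ) ^ k * x ^ (2*M+4 - 2 * k))
        = (∑ j ∈ Finset.range (M+1),
            q ^ ((j+2) * (j+2+1) / 2) * qbinom q (2*M+4 - (j+2)) (j+2) * (-1 : ℝ) ^ (j+2)
              * x ^ (2*M+4 - 2 * (j+2)))
          + q ^ (1 * (1 + 1) / 2) * qbinom q (2*M+4 - 1) 1 * (-1 : ℝ) ^ 1 * x ^ (2*M+4 - 2 * 1)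
          + q ^ (0 * (0 + 1) / 2) * qbinom q (2*M+4 - 0) 0 * (-1 : ℝ) ^ 0 * x ^ (2*M+4 - 2 * 0) :=
      dA _ (M+1)
    have HA2 : (∑ j ∈ Finset.range (M+1),
          q ^ ((j+2) * (j+2+1) / 2) * qbinom q (2*M+4 - (j+2)) (j+2) * (-1 : ℝ) ^ (j+2)
            * x ^ (2*M+4 - 2 * (j+2)))
        = (∑ j ∈ Finset.range M,
            q ^ ((j+2) * (j+2+1) / 2) * qbinom q (2*M+4 - (j+2)) (j+2) * (-1 : ℝ) ^ (j+2)
              * x ^ (2*M+4 - 2 * (j+2)))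
          + q ^ ((M+2) * (M+2+1) / 2) * qbinom q (2*M+4 - (M+2)) (M+2) * (-1 : ℝ) ^ (M+2)
              * x ^ (2*M+4 - 2 * (M+2)) :=
      Finset.sum_range_succ _ M
    have HB : (∑ k ∈ Finset.range (M+2),
          q ^ (k * (k + 1) / 2) * qbinom q (2*M+3 - k) k * (-1 : ℝ) ^ k * x ^ (2*M+4 - 2 * k))
        = (∑ j ∈ Finset.range M,
            q ^ ((j+2) * (j+2+1) / 2) * qbinom q (2*M+3 - (j+2)) (j+2) * (-1 : ℝ) ^ (j+2)
              * x ^ (2*M+4 - 2 * (j+2)))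
          + q ^ (1 * (1 + 1) / 2) * qbinom q (2*M+3 - 1) 1 * (-1 : ℝ) ^ 1 * x ^ (2*M+4 - 2 * 1)
          + q ^ (0 * (0 + 1) / 2) * qbinom q (2*M+3 - 0) 0 * (-1 : ℝ) ^ 0 * x ^ (2*M+4 - 2 * 0) :=
      dA _ M
    have HC : (∑ k ∈ Finset.range (M+1),
          q ^ (2*M+3 + k * (k + 1) / 2) * qbinom q (2*M+1 - k) k * (-1 : ℝ) ^ k * x ^ (2*M+2 - 2 * k))
        = (∑ j ∈ Finset.range M,
            q ^ (2*M+3 + (j+1) * (j+1+1) / 2) * qbinom q (2*M+1 - (j+1)) (j+1) * (-1 : ℝ) ^ (j+1)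
              * x ^ (2*M+2 - 2 * (j+1)))
          + q ^ (2*M+3 + 0 * (0 + 1) / 2) * qbinom q (2*M+1 - 0) 0 * (-1 : ℝ) ^ 0 * x ^ (2*M+2 - 2 * 0) :=
      Finset.sum_range_succ' _ M
    have HD : (∑ k ∈ Finset.range (M+1),
          q ^ (2*M+3 + k * (k + 1) / 2) * qbinom q (2*M - k) k * (-1 : ℝ) ^ k * x ^ (2*M - 2 * k))
        = (∑ j ∈ Finset.range M,
            q ^ (2*M+3 + j * (j + 1) / 2) * qbinom q (2*M - j) j * (-1 : ℝ) ^ j * x ^ (2*M - 2 * j))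
          + q ^ (2*M+3 + M * (M + 1) / 2) * qbinom q (2*M - M) M * (-1 : ℝ) ^ M * x ^ (2*M - 2 * M) :=
      Finset.sum_range_succ _ M
    have h0 : q ^ (0 * (0 + 1) / 2) * qbinom q (2*M+4 - 0) 0 * (-1 : ℝ) ^ 0 * x ^ (2*M+4 - 2 * 0)
        = q ^ (0 * (0 + 1) / 2) * qbinom q (2*M+3 - 0) 0 * (-1 : ℝ) ^ 0 * x ^ (2*M+4 - 2 * 0) := by
      rw [qbinom_zero hq0 hq1, qbinom_zero hq0 hq1]
    have h1 : q ^ (1 * (1 + 1) / 2) * qbinom q (2*M+4 - 1) 1 * (-1 : ℝ) ^ 1 * x ^ (2*M+4 - 2 * 1)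
        = q ^ (1 * (1 + 1) / 2) * qbinom q (2*M+3 - 1) 1 * (-1 : ℝ) ^ 1 * x ^ (2*M+4 - 2 * 1)
          - q ^ (2*M+3 + 0 * (0 + 1) / 2) * qbinom q (2*M+1 - 0) 0 * (-1 : ℝ) ^ 0
              * x ^ (2*M+2 - 2 * 0) := by
      rw [show 2*M+4-1 = 2*M+1+2 from by omega, show 2*M+3-1 = 2*M+1+1 from by omega,
          qbinom_one_succ hq0 hq1 (2*M+1), qbinom_zero hq0 hq1,
          show 2*M+4-2*1 = 2*M+2 from by omega, show 2*M+2-2*0 = 2*M+2 from by omega,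
          show 1*(1+1)/2 = 1 from by omega, show 2*M+3+0*(0+1)/2 = 2*M+3 from by omega]
      ring
    have htop : q ^ ((M+2) * (M+2+1) / 2) * qbinom q (2*M+4 - (M+2)) (M+2) * (-1 : ℝ) ^ (M+2)
          * x ^ (2*M+4 - 2 * (M+2))
        = q ^ (2*M+3 + M * (M + 1) / 2) * qbinom q (2*M - M) M * (-1 : ℝ) ^ M
            * x ^ (2*M - 2 * M) := by
      rw [show 2*M+4-(M+2) = M+2 from by omega, show 2*M-M = M from by omega,
          show 2*M+4-2*(M+2) = 0 from by omega, show 2*M-2*M = 0 from by omega,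
          qbinom_self hq0 hq1, qbinom_self hq0 hq1, tri_add_two M, pow_add]
      ring
    have Hgen : (∑ j ∈ Finset.range M,
          q ^ ((j+2) * (j+2+1) / 2) * qbinom q (2*M+4 - (j+2)) (j+2) * (-1 : ℝ) ^ (j+2)
            * x ^ (2*M+4 - 2 * (j+2)))
        = (∑ j ∈ Finset.range M,
            q ^ ((j+2) * (j+2+1) / 2) * qbinom q (2*M+3 - (j+2)) (j+2) * (-1 : ℝ) ^ (j+2)
              * x ^ (2*M+4 - 2 * (j+2)))
          - (∑ j ∈ Finset.range M,
            q ^ (2*M+3 + (j+1) * (j+1+1) / 2) * qbinom q (2*M+1 - (j+1)) (j+1) * (-1 : ℝ) ^ (j+1)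
              * x ^ (2*M+2 - 2 * (j+1)))
          + (∑ j ∈ Finset.range M,
            q ^ (2*M+3 + j * (j + 1) / 2) * qbinom q (2*M - j) j * (-1 : ℝ) ^ j
              * x ^ (2*M - 2 * j)) := by
      rw [← Finset.sum_sub_distrib, ← Finset.sum_add_distrib]
      refine Finset.sum_congr rfl fun j hj => ?_
      have hj' := Finset.mem_range.mp hj
      obtain ⟨t, ht⟩ : ∃ t, M = j + t + 1 := ⟨M - j - 1, by omega⟩
      have hcore := qbinom_core hq0 hq1 j (2*t+1)
      rw [show 2*M+4-(j+2) = j+(2*t+1)+3 from by omega,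
          show 2*M+3-(j+2) = j+(2*t+1)+2 from by omega,
          show 2*M+1-(j+1) = j+(2*t+1)+1 from by omega,
          show 2*M-j = j+(2*t+1)+1 from by omega,
          show 2*M+4-2*(j+2) = 2*t+2 from by omega,
          show 2*M+2-2*(j+1) = 2*t+2 from by omega,
          show 2*M-2*j = 2*t+2 from by omega,
          tri_add_two j, tri_add_one j,
          show 2*M+3 = 2*j+2*t+5 from by omega]
      linear_combination (q ^ (j*(j+1)/2 + (2*j+3)) * (-1 : ℝ)^(j+2) * x^(2*t+2)) * hcore
    linarith [HA, HA2, HB, HC, HD, Hgen, h0, h1, htop]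
  · -- n = 2m+1, odd case
    obtain ⟨M, rfl⟩ : ∃ M, m = M + 2 := ⟨m - 2, by omega⟩
    subst hm
    simp only [hF]
    rw [show 2*(M+2)+1-1 = 2*M+4 from by omega, show 2*(M+2)+1-3 = 2*M+2 from by omega,
        show 2*(M+2)+1-4 = 2*M+1 from by omega, show 2*(M+2)+1 = 2*M+5 from by omega,
        show (2*M+5)/2+1 = M+3 from by omega, show (2*M+4)/2+1 = M+3 from by omega,
        show (2*M+2)/2+1 = M+2 from by omega, show (2*M+1)/2+1 = M+1 from by omega]
    have E1 : x * (∑ k ∈ Finset.range (M+3),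
          q ^ (k * (k + 1) / 2) * qbinom q (2*M+4 - k) k * (-1 : ℝ) ^ k * x ^ (2*M+4 - 2 * k))
        = ∑ k ∈ Finset.range (M+3),
          q ^ (k * (k + 1) / 2) * qbinom q (2*M+4 - k) k * (-1 : ℝ) ^ k * x ^ (2*M+5 - 2 * k) := by
      rw [Finset.mul_sum]
      refine Finset.sum_congr rfl fun k hk => ?_
      have hk' := Finset.mem_range.mp hk
      rw [show 2*M+5-2*k = (2*M+4-2*k)+1 from by omega, pow_succ]
      ring
    have E2 : q ^ (2*M+4) * x * (∑ k ∈ Finset.range (M+2),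
          q ^ (k * (k + 1) / 2) * qbinom q (2*M+2 - k) k * (-1 : ℝ) ^ k * x ^ (2*M+2 - 2 * k))
        = ∑ k ∈ Finset.range (M+2),
          q ^ (2*M+4 + k * (k + 1) / 2) * qbinom q (2*M+2 - k) k * (-1 : ℝ) ^ k * x ^ (2*M+3 - 2 * k) := by
      rw [Finset.mul_sum]
      refine Finset.sum_congr rfl fun k hk => ?_
      have hk' := Finset.mem_range.mp hk
      rw [show 2*M+3-2*k = (2*M+2-2*k)+1 from by omega, pow_succ, pow_add]
      ring
    have E3 : q ^ (2*M+4) * (∑ k ∈ Finset.range (M+1),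
          q ^ (k * (k + 1) / 2) * qbinom q (2*M+1 - k) k * (-1 : ℝ) ^ k * x ^ (2*M+1 - 2 * k))
        = ∑ k ∈ Finset.range (M+1),
          q ^ (2*M+4 + k * (k + 1) / 2) * qbinom q (2*M+1 - k) k * (-1 : ℝ) ^ k * x ^ (2*M+1 - 2 * k) := by
      rw [Finset.mul_sum]
      refine Finset.sum_congr rfl fun k _ => ?_
      rw [pow_add]
      ring
    rw [E1, E2, E3]
    have HA : (∑ k ∈ Finset.range (M+3),
          q ^ (k * (k + 1) / 2) * qbinom q (2*M+5 - k) k * (-1 : ℝ) ^ k * x ^ (2*M+5 - 2 * k))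
        = (∑ j ∈ Finset.range (M+1),
            q ^ ((j+2) * (j+2+1) / 2) * qbinom q (2*M+5 - (j+2)) (j+2) * (-1 : ℝ) ^ (j+2)
              * x ^ (2*M+5 - 2 * (j+2)))
          + q ^ (1 * (1 + 1) / 2) * qbinom q (2*M+5 - 1) 1 * (-1 : ℝ) ^ 1 * x ^ (2*M+5 - 2 * 1)
          + q ^ (0 * (0 + 1) / 2) * qbinom q (2*M+5 - 0) 0 * (-1 : ℝ) ^ 0 * x ^ (2*M+5 - 2 * 0) :=
      dA _ (M+1)
    have HB : (∑ k ∈ Finset.range (M+3),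
          q ^ (k * (k + 1) / 2) * qbinom q (2*M+4 - k) k * (-1 : ℝ) ^ k * x ^ (2*M+5 - 2 * k))
        = (∑ j ∈ Finset.range (M+1),
            q ^ ((j+2) * (j+2+1) / 2) * qbinom q (2*M+4 - (j+2)) (j+2) * (-1 : ℝ) ^ (j+2)
              * x ^ (2*M+5 - 2 * (j+2)))
          + q ^ (1 * (1 + 1) / 2) * qbinom q (2*M+4 - 1) 1 * (-1 : ℝ) ^ 1 * x ^ (2*M+5 - 2 * 1)
          + q ^ (0 * (0 + 1) / 2) * qbinom q (2*M+4 - 0) 0 * (-1 : ℝ) ^ 0 * x ^ (2*M+5 - 2 * 0) :=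
      dA _ (M+1)
    have HC : (∑ k ∈ Finset.range (M+2),
          q ^ (2*M+4 + k * (k + 1) / 2) * qbinom q (2*M+2 - k) k * (-1 : ℝ) ^ k * x ^ (2*M+3 - 2 * k))
        = (∑ j ∈ Finset.range (M+1),
            q ^ (2*M+4 + (j+1) * (j+1+1) / 2) * qbinom q (2*M+2 - (j+1)) (j+1) * (-1 : ℝ) ^ (j+1)
              * x ^ (2*M+3 - 2 * (j+1)))
          + q ^ (2*M+4 + 0 * (0 + 1) / 2) * qbinom q (2*M+2 - 0) 0 * (-1 : ℝ) ^ 0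
              * x ^ (2*M+3 - 2 * 0) :=
      Finset.sum_range_succ' _ (M+1)
    have h0 : q ^ (0 * (0 + 1) / 2) * qbinom q (2*M+5 - 0) 0 * (-1 : ℝ) ^ 0 * x ^ (2*M+5 - 2 * 0)
        = q ^ (0 * (0 + 1) / 2) * qbinom q (2*M+4 - 0) 0 * (-1 : ℝ) ^ 0 * x ^ (2*M+5 - 2 * 0) := by
      rw [qbinom_zero hq0 hq1, qbinom_zero hq0 hq1]
    have h1 : q ^ (1 * (1 + 1) / 2) * qbinom q (2*M+5 - 1) 1 * (-1 : ℝ) ^ 1 * x ^ (2*M+5 - 2 * 1)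
        = q ^ (1 * (1 + 1) / 2) * qbinom q (2*M+4 - 1) 1 * (-1 : ℝ) ^ 1 * x ^ (2*M+5 - 2 * 1)
          - q ^ (2*M+4 + 0 * (0 + 1) / 2) * qbinom q (2*M+2 - 0) 0 * (-1 : ℝ) ^ 0
              * x ^ (2*M+3 - 2 * 0) := by
      rw [show 2*M+5-1 = 2*M+2+2 from by omega, show 2*M+4-1 = 2*M+2+1 from by omega,
          qbinom_one_succ hq0 hq1 (2*M+2), qbinom_zero hq0 hq1,
          show 2*M+5-2*1 = 2*M+3 from by omega, show 2*M+3-2*0 = 2*M+3 from by omega,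
          show 1*(1+1)/2 = 1 from by omega, show 2*M+4+0*(0+1)/2 = 2*M+4 from by omega]
      ring
    have Hgen : (∑ j ∈ Finset.range (M+1),
          q ^ ((j+2) * (j+2+1) / 2) * qbinom q (2*M+5 - (j+2)) (j+2) * (-1 : ℝ) ^ (j+2)
            * x ^ (2*M+5 - 2 * (j+2)))
        = (∑ j ∈ Finset.range (M+1),
            q ^ ((j+2) * (j+2+1) / 2) * qbinom q (2*M+4 - (j+2)) (j+2) * (-1 : ℝ) ^ (j+2)
              * x ^ (2*M+5 - 2 * (j+2)))
          - (∑ j ∈ Finset.range (M+1),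
            q ^ (2*M+4 + (j+1) * (j+1+1) / 2) * qbinom q (2*M+2 - (j+1)) (j+1) * (-1 : ℝ) ^ (j+1)
              * x ^ (2*M+3 - 2 * (j+1)))
          + (∑ j ∈ Finset.range (M+1),
            q ^ (2*M+4 + j * (j + 1) / 2) * qbinom q (2*M+1 - j) j * (-1 : ℝ) ^ j
              * x ^ (2*M+1 - 2 * j)) := by
      rw [← Finset.sum_sub_distrib, ← Finset.sum_add_distrib]
      refine Finset.sum_congr rfl fun j hj => ?_
      have hj' := Finset.mem_range.mp hj
      obtain ⟨t, ht⟩ : ∃ t, M = j + t := ⟨M - j, by omega⟩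
      have hcore := qbinom_core hq0 hq1 j (2*t)
      rw [show 2*M+5-(j+2) = j+2*t+3 from by omega,
          show 2*M+4-(j+2) = j+2*t+2 from by omega,
          show 2*M+2-(j+1) = j+2*t+1 from by omega,
          show 2*M+1-j = j+2*t+1 from by omega,
          show 2*M+5-2*(j+2) = 2*t+1 from by omega,
          show 2*M+3-2*(j+1) = 2*t+1 from by omega,
          show 2*M+1-2*j = 2*t+1 from by omega,
          tri_add_two j, tri_add_one j,
          show 2*M+4 = 2*j+2*t+4 from by omega]
      linear_combination (q ^ (j*(j+1)/2 + (2*j+3)) * (-1 : ℝ)^(j+2) * x^(2*t+1)) * hcore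
    linarith [HA, HB, HC, Hgen, h0, h1]
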